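/- Let Q be the cyclic quiver of length ℓ ≥ 1 with Cartan matrix C_Q, and let v, d ∈ ℕ^{Q₀} with d ≠ 0. Then the following are equivalent: (i) for every u ∈ ℕ^{Q₀} with u_i ≤ v_i for all i, one has u·(d − C_Q v) + (1/2) u·C_Q u ≥ min_{i ∈ Q₀} u_i; (ii) for every nonempty connected subset I ⊆ Q₀, one has e_I·(d − C_Q v) ≥ −1. -/

import Mathlib

open Matrix

noncomputable section

/-- The underlying graph of the cyclic quiver of length `ℓ`. -/
def cyclicGraph (ℓ : ℕ) : SimpleGraph (ZMod ℓ) where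
  Adj i j := i ≠ j ∧ (j = i + 1 ∨ i = j + 1)
  symm := ⟨by
    intro i j h
    exact ⟨h.1.symm, h.2.symm⟩⟩
  loopless := ⟨fun i h => h.1 rfl⟩

/-- A nonempty subset `I` of the vertices of the cyclic quiver is connected if the full
subgraph induced on `I` is connected. -/
def CyclicConnected (ℓ : ℕ) (I : Finset (ZMod ℓ)) : Prop :=
  ((cyclicGraph ℓ).induce (I : Set (ZMod ℓ))).Connected

/-- The Cartan matrix `C_Q = 2·Id - A - Aᵀ` of the cyclic quiver of length `ℓ`. -/
def cyclicCartan (ℓ : ℕ) : Matrix (ZMod ℓ) (ZMod ℓ) ℤ := fun i j =>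
  2 * (if i = j then 1 else 0) - (if j = i + 1 then 1 else 0) - (if i = j + 1 then 1 else 0)

/-- The indicator vector `e_I = ∑_{i ∈ I} e_i` of a subset of vertices. -/
def eInd (ℓ : ℕ) (I : Finset (ZMod ℓ)) : ZMod ℓ → ℤ := fun i => if i ∈ I then 1 else 0

set_option linter.unusedSectionVars false
set_option maxHeartbeats 1000000

namespace CyclicAux

variable {ℓ : ℕ} [NeZero ℓ]

def itv (a : ZMod ℓ) (n : ℕ) : Finset (ZMod ℓ) :=
  (Finset.range n).image (fun k : ℕ => a + (k : ZMod ℓ))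

lemma mem_itv {a x : ZMod ℓ} {n : ℕ} : x ∈ itv a n ↔ ∃ k < n, x = a + (k : ZMod ℓ) := by
  simp [itv, eq_comm]

lemma natCast_inj_of_lt {p q : ℕ} (hp : p < ℓ) (hq : q < ℓ) (h : (p : ZMod ℓ) = q) : p = q := by
  have h1 := ZMod.val_cast_of_lt hp
  have h2 := ZMod.val_cast_of_lt hq
  rw [h] at h1; omega

lemma natCast_ne_zero {p : ℕ} (hp0 : 0 < p) (hp : p < ℓ) : (p : ZMod ℓ) ≠ 0 := by
  intro h
  have := natCast_inj_of_lt hp (Nat.pos_of_ne_zero (NeZero.ne ℓ)) (by simpa using h)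
  omega

lemma card_itv {a : ZMod ℓ} {n : ℕ} (hn : n ≤ ℓ) : (itv a n).card = n := by
  rw [itv, Finset.card_image_of_injOn, Finset.card_range]
  intro p hp q hq h
  simp only [Finset.mem_coe, Finset.mem_range] at hp hq
  exact natCast_inj_of_lt (lt_of_lt_of_le hp hn) (lt_of_lt_of_le hq hn) (by
    have := add_left_cancel h; exact_mod_cast this)

def wv (v d : ZMod ℓ → ℕ) (i : ZMod ℓ) : ℤ :=
  (d i : ℤ) + (v (i+1) : ℤ) + (v (i-1) : ℤ) - 2 * (v i : ℤ)

def SI (v d : ZMod ℓ → ℕ) (I : Finset (ZMod ℓ)) : ℤ := ∑ i ∈ I, wv v d i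

lemma cartan_row (v : ZMod ℓ → ℕ) (i : ZMod ℓ) :
    ∑ j, cyclicCartan ℓ i j * (v j : ℤ) = 2 * (v i : ℤ) - (v (i+1) : ℤ) - (v (i-1) : ℤ) := by
  have h1 : ∀ j : ZMod ℓ, (i = j + 1) ↔ (j = i - 1) := by
    intro j
    constructor
    · intro h; rw [h]; ring
    · intro h; rw [h]; ring
  simp only [cyclicCartan, sub_mul, mul_ite, mul_one, mul_zero, ite_mul, one_mul, zero_mul]
  rw [Finset.sum_sub_distrib, Finset.sum_sub_distrib]
  congr 1
  congr 1
  · rw [Finset.sum_ite_eq (Finset.univ) i (fun j => 2 * (v j : ℤ))]; simp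
  · rw [Finset.sum_ite_eq' (Finset.univ) (i+1) (fun j => (v j : ℤ))]; simp
  · simp only [h1]
    rw [Finset.sum_ite_eq' (Finset.univ) (i-1) (fun j => (v j : ℤ))]; simp

lemma wv_eq (v d : ZMod ℓ → ℕ) (i : ZMod ℓ) :
    wv v d i = (d i : ℤ) - ∑ j, cyclicCartan ℓ i j * (v j : ℤ) := by
  rw [cartan_row]; unfold wv; ring

lemma sum_shift (f : ZMod ℓ → ℤ) (c : ZMod ℓ) : ∑ i, f (i + c) = ∑ i, f i :=
  Fintype.sum_equiv (Equiv.addRight c) _ _ (fun i => rfl)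

lemma sum_wv (v d : ZMod ℓ → ℕ) : ∑ i, wv v d i = ∑ i, (d i : ℤ) := by
  unfold wv
  have h1 := sum_shift (fun i => (v i : ℤ)) 1
  have h2 := sum_shift (fun i => (v i : ℤ)) (-1)
  simp only [Finset.sum_sub_distrib, Finset.sum_add_distrib, ← Finset.mul_sum]
  simp only [sub_eq_iff_eq_add]
  have : ∀ i : ZMod ℓ, i - 1 = i + (-1) := fun i => by ring
  simp only [this]
  rw [h1, h2]; ring

/-- quadratic identity -/
lemma quad_eq (u : ZMod ℓ → ℕ) :
    ∑ i, ∑ j, (u i : ℤ) * cyclicCartan ℓ i j * (u j : ℤ) = ∑ i, ((u i : ℤ) - (u (i+1) : ℤ))^2 := by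
  have hrow : ∀ i, ∑ j, (u i : ℤ) * cyclicCartan ℓ i j * (u j : ℤ)
      = (u i : ℤ) * (2 * (u i : ℤ) - (u (i+1) : ℤ) - (u (i-1) : ℤ)) := by
    intro i
    rw [← cartan_row u i, Finset.mul_sum]
    congr 1; ext j; ring
  simp only [hrow]
  have h1 := sum_shift (fun i => ((u i : ℤ))^2) 1
  have h2 : ∑ i, (u i : ℤ) * (u (i - 1) : ℤ) = ∑ i, (u (i+1) : ℤ) * (u i : ℤ) := by
    have := sum_shift (fun i => (u (i+1) : ℤ) * (u i : ℤ)) (-1)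
    rw [← this]
    apply Finset.sum_congr rfl
    intro i _
    have e1 : i + -1 + 1 = i := by ring
    have e2 : i + -1 = i - 1 := by ring
    rw [e1, e2]
  have expand : ∀ i : ZMod ℓ, ((u i : ℤ) - (u (i+1) : ℤ))^2
      = (u i:ℤ)^2 + (u (i+1):ℤ)^2 - 2 * ((u i:ℤ) * (u (i+1):ℤ)) := by intro i; ring
  simp only [expand]
  have expand2 : ∀ i : ZMod ℓ, (u i : ℤ) * (2 * (u i : ℤ) - (u (i+1) : ℤ) - (u (i-1) : ℤ))
      = 2 * (u i:ℤ)^2 - (u i:ℤ)*(u (i+1):ℤ) - (u i:ℤ)*(u (i-1):ℤ) := by intro i; ring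
  simp only [expand2]
  simp only [Finset.sum_sub_distrib, Finset.sum_add_distrib, ← Finset.mul_sum]
  rw [h2, h1]
  have h3 : ∑ i : ZMod ℓ, (u (i+1):ℤ) * (u i:ℤ) = ∑ i, (u i:ℤ) * (u (i+1):ℤ) :=
    Finset.sum_congr rfl (fun i _ => mul_comm _ _)
  rw [h3]
  linarith [h1]

lemma exists_component (S : Finset (ZMod ℓ)) {i g : ZMod ℓ} (hi : i ∈ S) (hg : g ∉ S) :
    ∃ (s : ZMod ℓ) (N : ℕ), 1 ≤ N ∧ N + 1 ≤ ℓ ∧ i ∈ itv s N ∧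
      (∀ k < N, s + (k : ZMod ℓ) ∈ S) ∧ s - 1 ∉ S ∧ s + (N : ZMod ℓ) ∉ S := by
  classical
  have hl2 : 2 ≤ ℓ := by
    by_contra h
    interval_cases ℓ
    · exact (NeZero.ne 0) rfl
    · exact hg (by
        have : g = i := Subsingleton.elim g i
        rw [this]; exact hi)
  -- find the start of the component
  have hval : ∀ x : ZMod ℓ, ((x.val : ℕ) : ZMod ℓ) = x := fun x => ZMod.natCast_zmod_val x
  have hPex : ∃ k : ℕ, i - ((k+1 : ℕ) : ZMod ℓ) ∉ S := by
    refine ⟨(i - g - 1).val, ?_⟩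
    have : ((((i - g - 1).val + 1 : ℕ)) : ZMod ℓ) = i - g := by
      push_cast [hval]; ring
    rw [this]
    simpa using hg
  set A := Nat.find hPex with hAdef
  have hA : i - ((A+1 : ℕ) : ZMod ℓ) ∉ S := Nat.find_spec hPex
  have hAmin : ∀ k < A, i - ((k+1 : ℕ) : ZMod ℓ) ∈ S := by
    intro k hk
    exact not_not.mp (Nat.find_min hPex hk)
  have hAlt : A < ℓ := by
    have h1 : A ≤ (i - g - 1).val := Nat.find_min' hPex (by
      have : ((((i - g - 1).val + 1 : ℕ)) : ZMod ℓ) = i - g := by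
        push_cast [hval]; ring
      rw [this]; simpa using hg)
    exact lt_of_le_of_lt h1 (ZMod.val_lt _)
  set s := i - ((A : ℕ) : ZMod ℓ) with hsdef
  have hsub : ∀ k ≤ A, i - ((k : ℕ) : ZMod ℓ) ∈ S := by
    intro k hk
    match k with
    | 0 => simpa using hi
    | (k+1) => exact hAmin k (by omega)
  have hs1 : s - 1 ∉ S := by
    have : s - 1 = i - ((A + 1 : ℕ) : ZMod ℓ) := by push_cast; ring
    rw [this]; exact hA
  -- find the length
  have hQex : ∃ n : ℕ, s + ((n+1 : ℕ) : ZMod ℓ) ∉ S := by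
    refine ⟨(-2 : ZMod ℓ).val, ?_⟩
    have : (((((-2 : ZMod ℓ).val) + 1 : ℕ)) : ZMod ℓ) = -1 := by
      push_cast [hval]; ring
    rw [this]
    have : s + (-1) = s - 1 := by ring
    rw [this]; exact hs1
  set N := Nat.find hQex + 1 with hNdef
  have hN : s + ((N : ℕ) : ZMod ℓ) ∉ S := Nat.find_spec hQex
  have hNmin : ∀ k, 1 ≤ k → k < N → s + ((k : ℕ) : ZMod ℓ) ∈ S := by
    intro k hk1 hk2
    by_contra h
    have h2 : k - 1 < Nat.find hQex := by omega
    have := not_not.mp (Nat.find_min hQex h2)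
    have h3 : k - 1 + 1 = k := by omega
    rw [h3] at this
    exact h this
  have hmem : ∀ k < N, s + ((k : ℕ) : ZMod ℓ) ∈ S := by
    intro k hk
    match k with
    | 0 => simpa using hsub A le_rfl
    | (k+1) => exact hNmin (k+1) (by omega) hk
  have hNl : N + 1 ≤ ℓ := by
    have hv : (-2 : ZMod ℓ).val = ℓ - 2 := by
      have h2 : ((ℓ - 2 : ℕ) : ZMod ℓ) = -2 := by
        have : ((ℓ - 2 : ℕ) : ZMod ℓ) + 2 = 0 := by
          have : ((ℓ - 2 : ℕ) + 2 : ℕ) = ℓ := by omega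
          calc ((ℓ - 2 : ℕ) : ZMod ℓ) + 2 = (((ℓ - 2 : ℕ) + 2 : ℕ) : ZMod ℓ) := by push_cast; ring
            _ = ((ℓ : ℕ) : ZMod ℓ) := by rw [this]
            _ = 0 := ZMod.natCast_self ℓ
        linear_combination this
      rw [← h2, ZMod.val_cast_of_lt (by omega)]
    have : N ≤ (-2 : ZMod ℓ).val + 1 := by
      have := Nat.find_min' hQex (by
        have : (((((-2 : ZMod ℓ).val) + 1 : ℕ)) : ZMod ℓ) = -1 := by
          push_cast [hval]; ring
        rw [this]
        have : s + (-1) = s - 1 := by ring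
        rw [this]; exact hs1)
      omega
    omega
  have hAN : A < N := by
    by_contra h
    push_neg at h
    have : s + ((N : ℕ) : ZMod ℓ) = i - (((A - N : ℕ)) : ZMod ℓ) := by
      rw [hsdef]
      push_cast [Nat.cast_sub h]
      ring
    exact hN (this ▸ hsub (A - N) (by omega))
  refine ⟨s, N, by omega, hNl, ?_, hmem, hs1, hN⟩
  rw [mem_itv]
  exact ⟨A, hAN, by rw [hsdef]; ring⟩

/-- intervals are connected -/
lemma itv_connected (a : ZMod ℓ) (n : ℕ) (hn : 1 ≤ n) (hnl : n ≤ ℓ) :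
    CyclicConnected ℓ (itv a n) := by
  classical
  rw [CyclicConnected]
  have ha : a ∈ itv a n := mem_itv.mpr ⟨0, by omega, by simp⟩
  rw [SimpleGraph.connected_iff]
  refine ⟨?_, ⟨⟨a, by simpa using ha⟩⟩⟩
  intro x y
  -- reachability from a to any vertex
  suffices h : ∀ z : ((itv a n : Set (ZMod ℓ))),
      ((cyclicGraph ℓ).induce (itv a n : Set (ZMod ℓ))).Reachable ⟨a, by simpa using ha⟩ z by
    exact (h x).symm.trans (h y)
  rcases Nat.eq_or_lt_of_le (Nat.one_le_iff_ne_zero.mpr (NeZero.ne ℓ)) with hℓ | hℓ2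
  · -- ℓ = 1 : subsingleton
    intro z
    have : (⟨a, by simpa using ha⟩ : ((itv a n : Set (ZMod ℓ)))) = z := by
      apply Subtype.ext
      have : Subsingleton (ZMod ℓ) := by rw [← hℓ]; infer_instance
      exact Subsingleton.elim _ _
    rw [this]
  · -- ℓ ≥ 2
    have hone : (1 : ZMod ℓ) ≠ 0 := by
      have := natCast_ne_zero (show 0 < 1 by omega) (show 1 < ℓ from hℓ2)
      simpa using this
    intro z
    obtain ⟨zz, hz⟩ := z
    obtain ⟨k, hk, hzz⟩ := mem_itv.mp (Finset.mem_coe.mp hz)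
    subst hzz
    revert hz
    induction k with
    | zero =>
      intro hz
      simp only [Nat.cast_zero, add_zero]
      exact SimpleGraph.Reachable.refl _
    | succ m ih =>
      intro hz
      have hm : a + (m : ZMod ℓ) ∈ itv a n := mem_itv.mpr ⟨m, by omega, rfl⟩
      have adj0 : (cyclicGraph ℓ).Adj (a + (m : ZMod ℓ)) (a + ((m+1 : ℕ) : ZMod ℓ)) := by
        show _ ≠ _ ∧ _
        constructor
        · intro hcontra
          push_cast at hcontra
          exact hone (by linear_combination -hcontra)
        · left; push_cast; ring
      have step : ((cyclicGraph ℓ).induce (itv a n : Set (ZMod ℓ))).Adj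
          ⟨a + (m : ZMod ℓ), by simpa using hm⟩
          ⟨a + ((m+1 : ℕ) : ZMod ℓ), hz⟩ := adj0
      exact ((ih (by omega) (by simpa using hm)) ).trans step.reachable

lemma walk_closed {V : Type*} {G : SimpleGraph V} (P : V → Prop)
    (closed : ∀ a b, G.Adj a b → P b → P a) :
    ∀ {y t : V}, P t → G.Walk y t → P y := by
  intro y t ht p
  induction p with
  | nil => exact ht
  | cons h _ ih => exact closed _ _ h (ih ht)


/-- connected nonempty subsets are intervals -/
lemma connected_is_itv (I : Finset (ZMod ℓ)) (hne : I.Nonempty) (hconn : CyclicConnected ℓ I) :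
    ∃ (a : ZMod ℓ) (n : ℕ), 1 ≤ n ∧ n ≤ ℓ ∧ I = itv a n := by
  classical
  by_cases huniv : I = Finset.univ
  · refine ⟨0, ℓ, Nat.pos_of_ne_zero (NeZero.ne ℓ), le_rfl, ?_⟩
    rw [huniv]
    apply (Finset.eq_univ_iff_forall.mpr ?_).symm
    intro x
    exact mem_itv.mpr ⟨x.val, ZMod.val_lt x, by rw [ZMod.natCast_zmod_val x, zero_add]⟩
  · obtain ⟨i, hi⟩ := hne
    obtain ⟨g, hg⟩ : ∃ g, g ∉ I := by
      by_contra h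
      push_neg at h
      exact huniv (Finset.eq_univ_iff_forall.mpr h)
    obtain ⟨s, N, hN1, hNl, hiJ, hmem, hs1, hsN⟩ := exists_component I hi hg
    refine ⟨s, N, hN1, by omega, ?_⟩
    apply Finset.Subset.antisymm
    · intro x hx
      obtain ⟨p⟩ := hconn.preconnected ⟨x, by simpa using hx⟩ ⟨i, by simpa using hi⟩
      refine walk_closed (G := (cyclicGraph ℓ).induce (I : Set (ZMod ℓ)))
        (fun y => (↑y : ZMod ℓ) ∈ itv s N) ?_ (by simpa using hiJ) p
      rintro ⟨y, hy⟩ ⟨z, hz⟩ hadj hzJ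
      simp only [Finset.mem_coe] at hy hz
      have hadj' : y ≠ z ∧ (z = y + 1 ∨ y = z + 1) := hadj
      obtain ⟨k, hk, rfl⟩ := mem_itv.mp hzJ
      rcases hadj'.2 with h | h
      · -- s + k = y + 1
        rcases Nat.eq_zero_or_pos k with h0 | h0
        · exfalso
          apply hs1
          have : y = s - 1 := by
            subst h0
            push_cast at h
            linear_combination -h
          rwa [← this]
        · refine mem_itv.mpr ⟨k - 1, by omega, ?_⟩
          show y = s + ((k - 1 : ℕ) : ZMod ℓ)
          have : ((k - 1 : ℕ) : ZMod ℓ) = (k : ZMod ℓ) - 1 := by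
            push_cast [Nat.cast_sub h0]
            ring
          rw [this]
          linear_combination -h
      · -- y = s + k + 1
        rcases Nat.lt_or_ge (k+1) N with h1 | h1
        · refine mem_itv.mpr ⟨k + 1, h1, ?_⟩
          show y = s + ((k + 1 : ℕ) : ZMod ℓ)
          rw [h]; push_cast; ring
        · exfalso
          apply hsN
          have hkN : k + 1 = N := by omega
          have hy2 : y = s + ((N : ℕ) : ZMod ℓ) := by
            rw [h, ← hkN]; push_cast; ring
          rwa [← hy2]
    · intro x hx
      obtain ⟨k, hk, rfl⟩ := mem_itv.mp hx
      exact hmem k hk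

def bcountN (S : Finset (ZMod ℓ)) : ℕ :=
  (Finset.univ.filter fun i => ¬((i ∈ S) ↔ (i + 1 ∈ S))).card

section ItvFacts

variable {s : ZMod ℓ} {N : ℕ} (hN1 : 1 ≤ N) (hNl : N + 1 ≤ ℓ)

include hN1 hNl

lemma sub_one_not_mem_itv : s - 1 ∉ itv s N := by
  intro h
  obtain ⟨k, hk, hke⟩ := mem_itv.mp h
  have : ((k + 1 : ℕ) : ZMod ℓ) = 0 := by push_cast; linear_combination -hke
  exact natCast_ne_zero (by omega) (by omega) this

lemma add_N_not_mem_itv : s + ((N : ℕ) : ZMod ℓ) ∉ itv s N := by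
  intro h
  obtain ⟨k, hk, hke⟩ := mem_itv.mp h
  have : ((N - k : ℕ) : ZMod ℓ) = 0 := by
    push_cast [Nat.cast_sub (le_of_lt hk)]
    linear_combination hke
  exact natCast_ne_zero (by omega) (by omega) this

lemma itv_endpoints_ne : s - 1 ≠ s + ((N - 1 : ℕ) : ZMod ℓ) := by
  intro h
  have : ((N : ℕ) : ZMod ℓ) = 0 := by
    push_cast [Nat.cast_sub hN1] at h ⊢
    linear_combination -h
  exact natCast_ne_zero (by omega) (by omega) this

lemma boundary_itv :
    (Finset.univ.filter fun i => ¬((i ∈ itv s N) ↔ (i + 1 ∈ itv s N)))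
      = {s - 1, s + ((N - 1 : ℕ) : ZMod ℓ)} := by
  ext i
  simp only [Finset.mem_filter, Finset.mem_univ, true_and, Finset.mem_insert,
    Finset.mem_singleton]
  constructor
  · intro h
    rcases Classical.em (i ∈ itv s N) with hin | hin
    · -- i ∈ J, i+1 ∉ J
      have hout : i + 1 ∉ itv s N := fun hc => h ⟨fun _ => hc, fun _ => hin⟩
      obtain ⟨k, hk, rfl⟩ := mem_itv.mp hin
      right
      rcases Nat.lt_or_ge (k + 1) N with h1 | h1
      · exact absurd (mem_itv.mpr ⟨k + 1, h1, by push_cast; ring⟩) hout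
      · have : k = N - 1 := by omega
        rw [this]
    · -- i ∉ J, i+1 ∈ J
      have hin2 : i + 1 ∈ itv s N := by
        by_contra hc
        exact h ⟨fun h2 => absurd h2 hin, fun h2 => absurd h2 hc⟩
      obtain ⟨k, hk, hke⟩ := mem_itv.mp hin2
      left
      rcases Nat.eq_zero_or_pos k with h0 | h0
      · subst h0
        push_cast at hke
        linear_combination hke
      · exfalso
        apply hin
        refine mem_itv.mpr ⟨k - 1, by omega, ?_⟩
        push_cast [Nat.cast_sub h0]
        linear_combination hke
  · intro h
    rcases h with h | h
    · subst h
      intro hiff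
      apply sub_one_not_mem_itv hN1 hNl
      apply hiff.mpr
      refine mem_itv.mpr ⟨0, by omega, by push_cast; ring⟩
    · subst h
      intro hiff
      apply add_N_not_mem_itv hN1 hNl
      have : s + ((N - 1 : ℕ) : ZMod ℓ) + 1 = s + ((N : ℕ) : ZMod ℓ) := by
        push_cast [Nat.cast_sub hN1]; ring
      rw [← this]
      apply hiff.mp
      exact mem_itv.mpr ⟨N - 1, by omega, rfl⟩

lemma bcountN_itv : bcountN (itv s N) = 2 := by
  rw [bcountN, boundary_itv hN1 hNl]
  rw [Finset.card_insert_of_notMem (by simp [itv_endpoints_ne hN1 hNl]), Finset.card_singleton]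

lemma bcountN_remove_component {S : Finset (ZMod ℓ)}
    (hmem : ∀ k < N, s + (k : ZMod ℓ) ∈ S) (hs1 : s - 1 ∉ S) (hsN : s + ((N : ℕ) : ZMod ℓ) ∉ S) :
    bcountN (S \ itv s N) + 2 ≤ bcountN S := by
  classical
  set J := itv s N with hJ
  set S' := S \ J with hS'
  have hJS : J ⊆ S := by
    intro x hx
    obtain ⟨k, hk, rfl⟩ := mem_itv.mp hx
    exact hmem k hk
  set D := Finset.univ.filter fun i => ¬((i ∈ S) ↔ (i + 1 ∈ S)) with hD
  set D' := Finset.univ.filter fun i => ¬((i ∈ S') ↔ (i + 1 ∈ S')) with hD'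
  have hmemS' : ∀ x, x ∈ S' ↔ x ∈ S ∧ x ∉ J := by intro x; simp [hS', Finset.mem_sdiff]
  have hsJ : s ∈ J := mem_itv.mpr ⟨0, by omega, by push_cast; ring⟩
  have hN1J : s + ((N - 1 : ℕ) : ZMod ℓ) ∈ J := mem_itv.mpr ⟨N - 1, by omega, rfl⟩
  have he1 : s - 1 ∈ D := by
    simp only [hD, Finset.mem_filter, Finset.mem_univ, true_and]
    intro hiff
    exact hs1 (hiff.mpr (by rw [sub_add_cancel]; exact hJS hsJ))
  have heq : s + ((N - 1 : ℕ) : ZMod ℓ) + 1 = s + ((N : ℕ) : ZMod ℓ) := by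
    push_cast [Nat.cast_sub hN1]; ring
  have he2 : s + ((N - 1 : ℕ) : ZMod ℓ) ∈ D := by
    simp only [hD, Finset.mem_filter, Finset.mem_univ, true_and]
    intro hiff
    exact hsN (heq ▸ hiff.mp (hJS hN1J))
  have hne1 : s - 1 ∉ D' := by
    simp only [hD', Finset.mem_filter, Finset.mem_univ, true_and, not_not]
    constructor
    · intro h; exact absurd ((hmemS' _).mp h).1 hs1
    · intro h
      rw [sub_add_cancel] at h
      exact absurd hsJ ((hmemS' _).mp h).2
  have hne2 : s + ((N - 1 : ℕ) : ZMod ℓ) ∉ D' := by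
    simp only [hD', Finset.mem_filter, Finset.mem_univ, true_and, not_not]
    constructor
    · intro h; exact absurd hN1J ((hmemS' _).mp h).2
    · intro h
      rw [heq] at h
      exact absurd ((hmemS' _).mp h).1 hsN
  have hsub : D' ∪ {s - 1, s + ((N - 1 : ℕ) : ZMod ℓ)} ⊆ D := by
    intro i hi
    rcases Finset.mem_union.mp hi with hi | hi
    · -- D' ⊆ D
      simp only [hD', Finset.mem_filter, Finset.mem_univ, true_and] at hi
      simp only [hD, Finset.mem_filter, Finset.mem_univ, true_and]
      intro hiff
      apply hi
      constructor
      · intro h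
        obtain ⟨hiS, hiJ⟩ := (hmemS' _).mp h
        refine (hmemS' _).mpr ⟨hiff.mp hiS, ?_⟩
        intro hc
        obtain ⟨k, hk, hke⟩ := mem_itv.mp hc
        rcases Nat.eq_zero_or_pos k with h0 | h0
        · subst h0
          apply hs1
          have : i = s - 1 := by push_cast at hke; linear_combination hke
          rwa [← this]
        · apply hiJ
          refine mem_itv.mpr ⟨k - 1, by omega, ?_⟩
          push_cast [Nat.cast_sub h0]
          linear_combination hke
      · intro h
        obtain ⟨hiS, hiJ⟩ := (hmemS' _).mp h
        refine (hmemS' _).mpr ⟨hiff.mpr hiS, ?_⟩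
        intro hc
        obtain ⟨k, hk, rfl⟩ := mem_itv.mp hc
        rcases Nat.lt_or_ge (k + 1) N with h1 | h1
        · exact hiJ (mem_itv.mpr ⟨k + 1, h1, by push_cast; ring⟩)
        · apply hsN
          have : k = N - 1 := by omega
          subst this
          rw [← heq]
          exact hiS
    · simp only [Finset.mem_insert, Finset.mem_singleton] at hi
      rcases hi with rfl | rfl
      · exact he1
      · exact he2
  have hdisj : Disjoint D' ({s - 1, s + ((N - 1 : ℕ) : ZMod ℓ)} : Finset (ZMod ℓ)) := by
    rw [Finset.disjoint_right]
    intro i hi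
    simp only [Finset.mem_insert, Finset.mem_singleton] at hi
    rcases hi with rfl | rfl
    · exact hne1
    · exact hne2
  have hcard : D'.card + 2 ≤ D.card := by
    have h1 := Finset.card_le_card hsub
    rw [Finset.card_union_of_disjoint hdisj] at h1
    have h2 : ({s - 1, s + ((N - 1 : ℕ) : ZMod ℓ)} : Finset (ZMod ℓ)).card = 2 := by
      rw [Finset.card_insert_of_notMem (by simp [itv_endpoints_ne hN1 hNl]), Finset.card_singleton]
    omega
  exact hcard

end ItvFacts

def T (v d : ZMod ℓ → ℕ) (a : ZMod ℓ) (n : ℕ) : ℤ :=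
  ∑ k ∈ Finset.range n, wv v d (a + (k : ZMod ℓ))

lemma T_eq_SI (v d : ZMod ℓ → ℕ) (a : ZMod ℓ) {n : ℕ} (hn : n ≤ ℓ) :
    T v d a n = SI v d (itv a n) := by
  rw [SI, itv, Finset.sum_image, T]
  intro p hp q hq h
  simp only [Finset.mem_coe, Finset.mem_range] at hp hq
  exact natCast_inj_of_lt (lt_of_lt_of_le hp hn) (lt_of_lt_of_le hq hn) (by
    have := add_left_cancel h; exact_mod_cast this)

lemma sum_indicator_mul (v d : ZMod ℓ → ℕ) (S : Finset (ZMod ℓ)) :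
    ∑ i, (((if i ∈ S then 1 else 0 : ℕ) : ℤ)) * wv v d i = SI v d S := by
  rw [SI]
  rw [← Finset.sum_filter_add_sum_filter_not Finset.univ (fun i => i ∈ S)]
  have h2 : ∀ i ∈ Finset.univ.filter (fun i => i ∉ S),
      (((if i ∈ S then 1 else 0 : ℕ) : ℤ)) * wv v d i = 0 := by
    intro i hi
    simp only [Finset.mem_filter] at hi
    simp [hi.2]
  rw [Finset.sum_eq_zero h2, add_zero]
  rw [Finset.filter_mem_eq_inter, Finset.univ_inter]
  apply Finset.sum_congr rfl
  intro i hi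
  simp [hi]

lemma quad_indicator (S : Finset (ZMod ℓ)) :
    ∑ i, (((if i ∈ S then 1 else 0 : ℕ) : ℤ) - ((if i+1 ∈ S then 1 else 0 : ℕ) : ℤ))^2
      = (bcountN S : ℤ) := by
  rw [bcountN]
  rw [← Finset.sum_filter_add_sum_filter_not Finset.univ
    (fun i => ¬((i ∈ S) ↔ (i + 1 ∈ S)))]
  have h2 : ∀ i ∈ Finset.univ.filter (fun i => ¬¬((i ∈ S) ↔ (i + 1 ∈ S))),
      (((if i ∈ S then 1 else 0 : ℕ) : ℤ) - ((if i+1 ∈ S then 1 else 0 : ℕ) : ℤ))^2 = 0 := by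
    intro i hi
    simp only [Finset.mem_filter, not_not] at hi
    by_cases h : i ∈ S
    · simp [h, hi.2.mp h]
    · have h3 : i + 1 ∉ S := fun hc => h (hi.2.mpr hc)
      simp [h, h3]
  rw [Finset.sum_eq_zero h2, add_zero]
  rw [Finset.sum_congr rfl (g := fun _ => (1:ℤ)) ?_, Finset.sum_const, nsmul_eq_mul, mul_one]
  intro i hi
  simp only [Finset.mem_filter] at hi
  by_cases h : i ∈ S
  · have h2 : i + 1 ∉ S := fun hc => hi.2 ⟨fun _ => hc, fun _ => h⟩
    simp [h, h2]
  · have h2 : i + 1 ∈ S := by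
      by_contra hc
      exact hi.2 ⟨fun hh => absurd hh h, fun hh => absurd hh hc⟩
    simp [h, h2]

section Main

variable (v d : ZMod ℓ → ℕ)

/-- abbreviation for the flatness hypothesis in integer form -/
def HypZ : Prop :=
  ∀ u : ZMod ℓ → ℕ, (∀ i, u i ≤ v i) →
    0 ≤ 2 * (∑ i, (u i : ℤ) * wv v d i) + ∑ i, ((u i : ℤ) - (u (i+1) : ℤ))^2

lemma interval_bound (H : HypZ v d) {s : ZMod ℓ} {N : ℕ} (hN1 : 1 ≤ N) (hNl : N + 1 ≤ ℓ)
    (hB : bcountN (itv s N) = 2)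
    (hpos : ∀ k < N, 1 ≤ v (s + (k : ZMod ℓ))) : -1 ≤ SI v d (itv s N) := by
  classical
  set u : ZMod ℓ → ℕ := fun i => if i ∈ itv s N then 1 else 0 with hu
  have hle : ∀ i, u i ≤ v i := by
    intro i
    rw [hu]
    by_cases h : i ∈ itv s N
    · obtain ⟨k, hk, rfl⟩ := mem_itv.mp h
      simpa [h] using hpos k hk
    · simp [h]
  have := H u hle
  rw [hu] at this
  simp only [] at this
  rw [sum_indicator_mul, quad_indicator, hB] at this
  omega

/-- the key strong induction for (i) → (ii) -/
lemma main_claim (H : HypZ v d)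
    (hBall : ∀ (s : ZMod ℓ) (N : ℕ), 1 ≤ N → N + 1 ≤ ℓ → bcountN (itv s N) = 2) :
    ∀ n, n + 1 ≤ ℓ → ∀ a : ZMod ℓ,
      (-1 ≤ T v d a n) ∧ (v (a + ((n - 1 : ℕ) : ZMod ℓ)) = 0 → 0 ≤ T v d a n) := by
  intro n
  induction n using Nat.strong_induction_on with
  | _ n ih =>
    intro hnl a
    match n with
    | 0 =>
      constructor
      · simp [T]
      · intro _; simp [T]
    | (N+1) =>
      have hTsplit : T v d a (N+1) = T v d a N + wv v d (a + ((N : ℕ) : ZMod ℓ)) := by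
        rw [T, Finset.sum_range_succ, T]
      by_cases hz : v (a + ((N : ℕ) : ZMod ℓ)) = 0
      · -- right endpoint is zero: conclude 0 ≤ T
        have hw : 0 ≤ wv v d (a + ((N : ℕ) : ZMod ℓ)) := by
          rw [wv, hz]; omega
        have hge : 0 ≤ T v d a (N+1) := by
          rcases Nat.eq_zero_or_pos N with rfl | hNpos
          · rw [hTsplit]
            have hT0 : T v d a 0 = 0 := by simp [T]
            omega
          · have ihM := ih N (by omega) (by omega) a
            by_cases hz2 : v (a + ((N - 1 : ℕ) : ZMod ℓ)) = 0
            · have h0 := ihM.2 hz2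
              rw [hTsplit]
              omega
            · have h1 := ihM.1
              have hw1 : 1 ≤ wv v d (a + ((N : ℕ) : ZMod ℓ)) := by
                rw [wv]
                have hprev : a + ((N : ℕ) : ZMod ℓ) - 1 = a + ((N - 1 : ℕ) : ZMod ℓ) := by
                  push_cast [Nat.cast_sub hNpos]; ring
                rw [hprev, hz]
                have : 1 ≤ v (a + ((N - 1 : ℕ) : ZMod ℓ)) := Nat.pos_of_ne_zero hz2
                omega
              rw [hTsplit]
              omega
        have hcon : v (a + (((N+1) - 1 : ℕ) : ZMod ℓ)) = 0 → 0 ≤ T v d a (N+1) := fun _ => hge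
        exact ⟨by omega, hcon⟩
      · -- right endpoint positive
        have hend : (((N+1) - 1 : ℕ)) = N := by omega
        refine ⟨?_, by rw [hend]; intro hc; exact absurd hc hz⟩
        by_cases hall : ∀ k < N + 1, 1 ≤ v (a + (k : ZMod ℓ))
        · -- the whole interval is positive: use the hypothesis H
          have := interval_bound v d H (s := a) (N := N+1) (by omega) (by omega)
            (hBall a (N+1) (by omega) (by omega)) hall
          rw [T_eq_SI v d a (by omega)]
          exact this
        · -- there is a zero; take the largest one
          push_neg at hall
          classical
          obtain ⟨k0, hk0N, hk0z⟩ := hall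
          set P : ℕ → Prop := fun k => v (a + (k : ZMod ℓ)) = 0 with hP
          set m0 := Nat.findGreatest P N with hm0
          have hPk0 : P k0 := by rw [hP]; omega
          have hPm0 : P m0 := Nat.findGreatest_spec (m := k0) (by omega) hPk0
          have hm0N : m0 ≤ N := Nat.findGreatest_le N
          have hm0lt : m0 < N ∨ m0 = N := by omega
          have hm0ltN : m0 < N := by
            rcases hm0lt with h | h
            · exact h
            · exfalso; rw [h] at hPm0; exact hz hPm0
          have hgt : ∀ j, m0 < j → j ≤ N → ¬ P j := fun j hj hjN =>
            Nat.findGreatest_is_greatest hj hjN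
          -- split the sum
          have hsum : T v d a (N+1) = T v d a (m0+1) + T v d (a + ((m0+1 : ℕ) : ZMod ℓ)) (N - m0) := by
            have hnn : N + 1 = (m0+1) + (N - m0) := by omega
            rw [T, hnn, Finset.sum_range_add]
            congr 1
            apply Finset.sum_congr rfl
            intro k _
            congr 1
            push_cast
            ring
          have hfirst : 0 ≤ T v d a (m0+1) := by
            have := (ih (m0+1) (by omega) (by omega) a).2
            apply this
            have : ((m0 + 1 - 1 : ℕ) : ZMod ℓ) = ((m0 : ℕ) : ZMod ℓ) := by norm_num
            rw [this]
            exact hPm0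
          have hsecond : -1 ≤ T v d (a + ((m0+1 : ℕ) : ZMod ℓ)) (N - m0) := by
            rw [T_eq_SI v d _ (by omega)]
            apply interval_bound v d H (by omega) (by omega)
              (hBall _ _ (by omega) (by omega))
            intro k hk
            have hj := hgt (m0+1+k) (by omega) (by omega)
            rw [hP] at hj
            have heq2 : a + ((m0+1 : ℕ) : ZMod ℓ) + (k : ZMod ℓ) = a + ((m0+1+k : ℕ) : ZMod ℓ) := by
              push_cast; ring
            rw [heq2]
            omega
          omega

lemma SI_univ : SI v d Finset.univ = ∑ i, (d i : ℤ) := sum_wv v d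

lemma bcountN_univ : bcountN (Finset.univ : Finset (ZMod ℓ)) = 0 := by
  simp [bcountN]

lemma one_le_sum_d (hd : d ≠ 0) : 1 ≤ ∑ i, (d i : ℤ) := by
  have : ∃ i, d i ≠ 0 := by
    by_contra h
    push_neg at h
    exact hd (funext h)
  obtain ⟨i, hi⟩ := this
  have h1 : (1 : ℤ) ≤ (d i : ℤ) := by omega
  have h2 : (d i : ℤ) ≤ ∑ j, (d j : ℤ) :=
    Finset.single_le_sum (f := fun j => (d j : ℤ)) (fun j _ => by positivity) (Finset.mem_univ i)
  omega

/-- hypothesis (ii) in internal form -/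
def HypII : Prop :=
  ∀ I : Finset (ZMod ℓ), I.Nonempty → CyclicConnected ℓ I → -1 ≤ SI v d I

lemma proper_bound (Hii : HypII v d) :
    ∀ S : Finset (ZMod ℓ), S ≠ Finset.univ → 0 ≤ 2 * SI v d S + (bcountN S : ℤ) := by
  suffices H : ∀ n (S : Finset (ZMod ℓ)), S.card = n → S ≠ Finset.univ →
      0 ≤ 2 * SI v d S + (bcountN S : ℤ) by
    intro S hS; exact H S.card S rfl hS
  intro n
  induction n using Nat.strong_induction_on with
  | _ n ih =>
    intro S hcard hSuniv
    rcases Finset.eq_empty_or_nonempty S with rfl | ⟨i, hi⟩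
    · simp [SI, bcountN]
    · obtain ⟨g, hg⟩ : ∃ g, g ∉ S := by
        by_contra h; push_neg at h; exact hSuniv (Finset.eq_univ_iff_forall.mpr h)
      obtain ⟨s, N, hN1, hNl, hiJ, hmem, hs1, hsN⟩ := exists_component S hi hg
      have hJS : itv s N ⊆ S := fun x hx => by
        obtain ⟨k, hk, rfl⟩ := mem_itv.mp hx; exact hmem k hk
      have hconn := itv_connected s N hN1 (by omega)
      have hne : (itv s N).Nonempty := ⟨s, mem_itv.mpr ⟨0, by omega, by push_cast; ring⟩⟩
      have hJbound := Hii _ hne hconn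
      have hsplit : SI v d (S \ itv s N) + SI v d (itv s N) = SI v d S :=
        Finset.sum_sdiff hJS
      have hbb := bcountN_remove_component hN1 hNl hmem hs1 hsN
      have hcard' : (S \ itv s N).card < n := by
        have h1 : (S \ itv s N).card = S.card - (itv s N).card := Finset.card_sdiff_of_subset hJS
        have h2 := card_itv (a := s) (n := N) (by omega : N ≤ ℓ)
        have h3 := Finset.card_le_card hJS
        omega
      have hS'univ : S \ itv s N ≠ Finset.univ := by
        intro h
        apply hSuniv
        apply Finset.eq_univ_iff_forall.mpr
        intro x
        have : x ∈ S \ itv s N := h ▸ Finset.mem_univ x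
        exact (Finset.mem_sdiff.mp this).1
      have ihS := ih _ hcard' _ rfl hS'univ
      omega

lemma sq_ge_countxor (a b M : ℕ) (ha : a ≤ M) (hb : b ≤ M) :
    ∑ k ∈ Finset.range M, (if ¬((k < a) ↔ (k < b)) then (1:ℤ) else 0) ≤ ((a:ℤ) - b)^2 := by
  classical
  rw [Finset.sum_boole]
  have hfilter : (Finset.range M).filter (fun k => ¬((k < a) ↔ (k < b)))
      = Finset.Ico (min a b) (max a b) := by
    ext k
    simp only [Finset.mem_filter, Finset.mem_range, Finset.mem_Ico]
    omega
  rw [hfilter, Nat.card_Ico]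
  set c : ℕ := max a b - min a b with hc
  have hsq : ((a:ℤ) - b)^2 = (c : ℤ)^2 := by
    rcases le_total a b with h | h
    · have hcc : (c : ℤ) = (b : ℤ) - a := by
        have hcb : c = b - a := by omega
        rw [hcb]; exact Nat.cast_sub h
      rw [hcc]; ring
    · have hcc : (c : ℤ) = (a : ℤ) - b := by
        have hcb : c = a - b := by omega
        rw [hcb]; exact Nat.cast_sub h
      rw [hcc]
  rw [hsq]
  have : c ≤ c^2 := Nat.le_self_pow two_ne_zero c
  exact_mod_cast this

/-- (ii) implies the integral inequality (i), including the minimum. -/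
lemma hypII_implies (hd : d ≠ 0) (Hii : HypII v d) (u : ZMod ℓ → ℕ) (m : ℕ)
    (hm : ∀ i, m ≤ u i) :
    2 * (m : ℤ) ≤ 2 * (∑ i, (u i : ℤ) * wv v d i) + ∑ i, ((u i : ℤ) - (u (i+1) : ℤ))^2 := by
  classical
  set M := Finset.univ.sup u with hM
  have hMle : ∀ i, u i ≤ M := fun i => Finset.le_sup (Finset.mem_univ i)
  set L : ℕ → Finset (ZMod ℓ) := fun k => Finset.univ.filter (fun i => k < u i) with hL
  have hmemL : ∀ k i, i ∈ L k ↔ k < u i := by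
    intro k i; simp [hL]
  -- linear part
  have hsum1 : ∑ i, (u i : ℤ) * wv v d i = ∑ k ∈ Finset.range M, SI v d (L k) := by
    have hcnt : ∀ i : ZMod ℓ,
        (u i : ℤ) = ∑ k ∈ Finset.range M, (if k < u i then (1:ℤ) else 0) := by
      intro i
      rw [Finset.sum_boole]
      have : (Finset.range M).filter (fun k => k < u i) = Finset.range (u i) := by
        ext k
        simp only [Finset.mem_filter, Finset.mem_range]
        have := hMle i
        omega
      rw [this, Finset.card_range]
    calc ∑ i, (u i : ℤ) * wv v d i
        = ∑ i, (∑ k ∈ Finset.range M, (if k < u i then (1:ℤ) else 0)) * wv v d i := by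
          apply Finset.sum_congr rfl; intro i _; rw [← hcnt]
      _ = ∑ i, ∑ k ∈ Finset.range M, (if k < u i then wv v d i else 0) := by
          apply Finset.sum_congr rfl; intro i _
          rw [Finset.sum_mul]
          apply Finset.sum_congr rfl; intro k _
          rw [ite_mul, one_mul, zero_mul]
      _ = ∑ k ∈ Finset.range M, ∑ i, (if k < u i then wv v d i else 0) := Finset.sum_comm
      _ = ∑ k ∈ Finset.range M, SI v d (L k) := by
          apply Finset.sum_congr rfl; intro k _
          rw [SI, hL, Finset.sum_filter]
  -- quadratic part
  have hquad : ∑ k ∈ Finset.range M, (bcountN (L k) : ℤ)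
      ≤ ∑ i, ((u i : ℤ) - (u (i+1) : ℤ))^2 := by
    have step1 : ∑ k ∈ Finset.range M, (bcountN (L k) : ℤ)
        = ∑ k ∈ Finset.range M, ∑ i, (if ¬((k < u i) ↔ (k < u (i+1))) then (1:ℤ) else 0) := by
      apply Finset.sum_congr rfl
      intro k _
      rw [bcountN, ← Finset.sum_boole]
      apply Finset.sum_congr rfl
      intro i _
      congr 1
      simp [hmemL]
    rw [step1, Finset.sum_comm]
    apply Finset.sum_le_sum
    intro i _
    exact sq_ge_countxor (u i) (u (i+1)) M (hMle i) (hMle (i+1))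
  -- per-level bound
  have hterm : ∀ k ∈ Finset.range M,
      (if k < m then (2:ℤ) else 0) ≤ 2 * SI v d (L k) + (bcountN (L k) : ℤ) := by
    intro k _
    by_cases hLu : L k = Finset.univ
    · have h1 : SI v d (L k) = ∑ i, (d i : ℤ) := by rw [hLu, SI_univ]
      have h2 : bcountN (L k) = 0 := by rw [hLu, bcountN_univ]
      have h3 := one_le_sum_d d hd
      rw [h1, h2]
      split <;> omega
    · have h1 := proper_bound v d Hii (L k) hLu
      have h2 : ¬ (k < m) := by
        intro hkm
        apply hLu
        apply Finset.eq_univ_iff_forall.mpr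
        intro i
        rw [hmemL]
        have := hm i
        omega
      rw [if_neg h2]
      omega
  -- conclusion
  have hmm : m ≤ M := by
    have : Nonempty (ZMod ℓ) := inferInstance
    obtain ⟨i⟩ := this
    exact le_trans (hm i) (hMle i)
  have hfin : 2 * (m : ℤ) = ∑ k ∈ Finset.range M, (if k < m then (2:ℤ) else 0) := by
    have : ∀ k, (if k < m then (2:ℤ) else 0) = 2 * (if k < m then (1:ℤ) else 0) := by
      intro k; split <;> ring
    simp only [this]
    rw [← Finset.mul_sum, Finset.sum_boole]
    have : (Finset.range M).filter (fun k => k < m) = Finset.range m := by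
      ext k
      simp only [Finset.mem_filter, Finset.mem_range]
      omega
    rw [this, Finset.card_range]
  have hsumbound := Finset.sum_le_sum hterm
  rw [← hfin] at hsumbound
  have hsplit2 : ∑ k ∈ Finset.range M, (2 * SI v d (L k) + (bcountN (L k) : ℤ))
      = 2 * (∑ k ∈ Finset.range M, SI v d (L k)) + ∑ k ∈ Finset.range M, (bcountN (L k) : ℤ) := by
    rw [Finset.sum_add_distrib, Finset.mul_sum]
  rw [hsplit2] at hsumbound
  rw [hsum1]
  omega

lemma eInd_sum (I : Finset (ZMod ℓ)) :
    ∑ i, (if i ∈ I then (1:ℤ) else 0) * ((d i : ℤ) - ∑ j, cyclicCartan ℓ i j * (v j : ℤ))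
      = SI v d I := by
  simp only [← wv_eq]
  simp only [ite_mul, one_mul, zero_mul]
  rw [← Finset.sum_filter, Finset.filter_mem_eq_inter, Finset.univ_inter, SI]

lemma bridgeA (u : ZMod ℓ → ℕ) :
    ∑ i, (u i : ℚ) * ((d i : ℚ) - ∑ j, ((cyclicCartan ℓ i j : ℚ) * (v j : ℚ)))
      = ((∑ i, (u i : ℤ) * wv v d i : ℤ) : ℚ) := by
  push_cast
  apply Finset.sum_congr rfl
  intro i _
  have h1 : ((wv v d i : ℤ) : ℚ) = (d i : ℚ) - ∑ j, ((cyclicCartan ℓ i j : ℚ) * (v j : ℚ)) := by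
    rw [wv_eq]
    push_cast
    ring
  rw [h1]

lemma bridgeB (u : ZMod ℓ → ℕ) :
    ∑ i, ∑ j, (u i : ℚ) * (cyclicCartan ℓ i j : ℚ) * (u j : ℚ)
      = ((∑ i, ((u i : ℤ) - (u (i+1) : ℤ))^2 : ℤ) : ℚ) := by
  rw [← quad_eq u]
  push_cast
  rfl

end Main
end CyclicAux

/-- The numerical core of the characterization of flatness of the moment map for framed
affine type A quivers: for the cyclic quiver of length `ℓ ≥ 1` and `v, d ∈ ℕ^{Q₀}` with
`d ≠ 0`, the inequality `u·(d - C_Q v) + (1/2) u·C_Q u ≥ min_i u_i` holds for all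
`0 ≤ u ≤ v` if and only if `e_I·(d - C_Q v) ≥ -1` for every nonempty connected `I ⊆ Q₀`. -/
theorem cyclic_flatness_inequality_iff
    (ℓ : ℕ) [NeZero ℓ] (v d : ZMod ℓ → ℕ) (hd : d ≠ 0) :
    (∀ u : ZMod ℓ → ℕ, (∀ i, u i ≤ v i) →
      ((∑ i, (u i : ℚ) * ((d i : ℚ) - ∑ j, ((cyclicCartan ℓ i j : ℚ) * (v j : ℚ))))
          + (1 / 2 : ℚ) * ∑ i, ∑ j, (u i : ℚ) * (cyclicCartan ℓ i j : ℚ) * (u j : ℚ)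
        ≥ Finset.univ.inf' Finset.univ_nonempty fun i => (u i : ℚ)))
    ↔ (∀ I : Finset (ZMod ℓ), I.Nonempty → CyclicConnected ℓ I →
        -1 ≤ ∑ i, eInd ℓ I i * ((d i : ℤ) - ∑ j, cyclicCartan ℓ i j * (v j : ℤ))) := by
  classical
  have hSIeq : ∀ I : Finset (ZMod ℓ),
      ∑ i, eInd ℓ I i * ((d i : ℤ) - ∑ j, cyclicCartan ℓ i j * (v j : ℤ))
        = CyclicAux.SI v d I := by
    intro I
    rw [← CyclicAux.eInd_sum v d I]
    rfl
  constructor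
  · -- (i) → (ii)
    intro H I hne hconn
    rw [hSIeq]
    have HZ : CyclicAux.HypZ v d := by
      intro u hu
      have hE := H u hu
      have hinf : (0 : ℚ) ≤ Finset.univ.inf' Finset.univ_nonempty fun i => (u i : ℚ) := by
        apply Finset.le_inf'
        intro i _
        positivity
      rw [CyclicAux.bridgeA v d u, CyclicAux.bridgeB u] at hE
      have hq : (0 : ℚ) ≤ ((2 * (∑ i, (u i : ℤ) * CyclicAux.wv v d i)
          + ∑ i, ((u i : ℤ) - (u (i+1) : ℤ))^2 : ℤ) : ℚ) := by
        push_cast at hE ⊢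
        linarith
      exact_mod_cast hq
    obtain ⟨a, n, hn1, hnl, rfl⟩ := CyclicAux.connected_is_itv I hne hconn
    rcases Nat.lt_or_ge n ℓ with hlt | hge
    · have := (CyclicAux.main_claim v d HZ
        (fun s N h1 h2 => CyclicAux.bcountN_itv h1 h2) n (by omega) a).1
      rwa [CyclicAux.T_eq_SI v d a (by omega)] at this
    · have hnn : n = ℓ := by omega
      have huniv : CyclicAux.itv a n = Finset.univ := by
        apply Finset.eq_univ_of_card
        rw [CyclicAux.card_itv (by omega), hnn, ZMod.card]
      rw [huniv, CyclicAux.SI_univ]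
      have := CyclicAux.one_le_sum_d d hd
      omega
  · -- (ii) → (i)
    intro Hii u hu
    have Hii' : CyclicAux.HypII v d := by
      intro I hne hconn
      rw [← hSIeq]
      exact Hii I hne hconn
    obtain ⟨i₀, _, hinf⟩ := Finset.exists_mem_eq_inf' (Finset.univ_nonempty)
      (fun i => (u i : ℚ))
    have hmono : ∀ i, u i₀ ≤ u i := by
      intro i
      have h1 : (Finset.univ.inf' Finset.univ_nonempty fun i => (u i : ℚ)) ≤ (u i : ℚ) :=
        Finset.inf'_le _ (Finset.mem_univ i)
      rw [hinf] at h1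
      exact_mod_cast h1
    have hZ := CyclicAux.hypII_implies v d hd Hii' u (u i₀) hmono
    have hq : (2 * ((u i₀ : ℕ) : ℤ) : ℚ) ≤ ((2 * (∑ i, (u i : ℤ) * CyclicAux.wv v d i)
        + ∑ i, ((u i : ℤ) - (u (i+1) : ℤ))^2 : ℤ) : ℚ) := by
      exact_mod_cast hZ
    rw [ge_iff_le, hinf]
    rw [CyclicAux.bridgeA v d u, CyclicAux.bridgeB u]
    push_cast at hq ⊢
    linarith

end
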